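/- Let P be a mirror poset. There is an orientation of P with zero crossing edges if and only if for every dual pair {ρ, ρ̄}, the elements ρ and ρ̄ lie in distinct connected components of the comparability graph of P (equivalently, of the undirected Hasse diagram of P). -/

import Mathlib

/-- A mirror poset admits an orientation with zero crossing edges iff for every
dual pair `{ρ, ρ̄}`, the elements `ρ` and `ρ̄` lie in distinct connected components
of the comparability graph. -/
theorem stmt9 {α : Type*} [PartialOrder α] [Finite α] (bar : α → α)
    (hinv : ∀ a, bar (bar a) = a)
    (hne : ∀ a, bar a ≠ a)
    (hincomp : ∀ a : α, ¬ a ≤ bar a ∧ ¬ bar a ≤ a)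
    (hmirror : ∀ a b : α, a ≤ b ↔ bar b ≤ bar a) :
    (∃ Pm : Set α, IsLowerSet Pm ∧ (∀ a, a ∈ Pm ↔ bar a ∉ Pm) ∧
        ∀ x ∈ Pm, ∀ y, y ∉ Pm → ¬ x ⋖ y) ↔
      ∀ a : α, ¬ Relation.ReflTransGen (fun x y : α => x ≤ y ∨ y ≤ x) a (bar a) := by
  classical
  set r : α → α → Prop := fun x y => x ≤ y ∨ y ≤ x with hr
  have hsymm : Symmetric r := fun x y h => h.symm
  have hRsymm : Symmetric (Relation.ReflTransGen r) :=
    fun x y h => @Std.Symm.symm _ _ (@Relation.ReflTransGen.stdSymm _ r ⟨fun a b h => hsymm h⟩) x y h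
  have hbarR : ∀ x y : α, Relation.ReflTransGen r x y →
      Relation.ReflTransGen r (bar x) (bar y) := by
    intro x y h
    refine Relation.ReflTransGen.lift bar (fun a b hab => ?_) _ _ h
    rcases hab with hab | hab
    · exact Or.inr ((hmirror a b).mp hab)
    · exact Or.inl ((hmirror b a).mp hab)
  constructor
  · rintro ⟨Pm, hlow, hdual, hcross⟩ a hconn
    have hWFlt : WellFounded ((· < ·) : α → α → Prop) :=
      (Finite.to_wellFoundedLT (α := α)).wf
    have hWFgt : WellFounded ((· > ·) : α → α → Prop) :=
      (Finite.to_wellFoundedGT (α := α)).wf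
    have hSA : IsStronglyAtomic α := IsStronglyAtomic.of_wellFounded_lt hWFlt
    have key : ∀ x : α, x ∈ Pm → ∀ y, y ∉ Pm → ¬ x ≤ y := by
      intro x
      induction x using hWFgt.induction with
      | _ x ih =>
        intro hx y hy hxy
        have hlt : x < y := lt_of_le_of_ne hxy (by rintro rfl; exact hy hx)
        obtain ⟨z, hcov, hzy⟩ := hSA.exists_covBy_le_of_lt x y hlt
        by_cases hz : z ∈ Pm
        · exact ih z hcov.lt hz y hy hzy
        · exact hcross x hx z hz hcov
    have step : ∀ x y : α, r x y → x ∈ Pm → y ∈ Pm := by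
      intro x y hxy hx
      rcases hxy with h | h
      · by_contra hy
        exact key x hx y hy h
      · exact hlow h hx
    have closed : ∀ x y : α, Relation.ReflTransGen r x y → x ∈ Pm → y ∈ Pm := by
      intro x y h
      induction h with
      | refl => exact id
      | tail _ hstep ih => exact fun hx => step _ _ hstep (ih hx)
    by_cases ha : a ∈ Pm
    · exact (hdual a).mp ha (closed a (bar a) hconn ha)
    · have hba : bar a ∈ Pm := by
        by_contra h
        exact ha ((hdual a).mpr h)
      have : a ∈ Pm := closed (bar a) a (hRsymm hconn) hba
      exact ha this
  · intro hsep
    have hequiv : Equivalence (Relation.ReflTransGen r) :=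
      ⟨fun _ => Relation.ReflTransGen.refl, fun h => hRsymm h, fun h1 h2 => h1.trans h2⟩
    let s : Setoid α := ⟨_, hequiv⟩
    obtain ⟨n, ⟨e⟩⟩ := Finite.exists_equiv_fin (Quotient s)
    have hq : ∀ x y : α, Relation.ReflTransGen r x y →
        Quotient.mk s x = Quotient.mk s y := fun x y h => Quotient.sound h
    refine ⟨{a | (e (Quotient.mk s a) : Fin n) < e (Quotient.mk s (bar a))}, ?_, ?_, ?_⟩
    · intro x y hyx hx
      have h1 : Quotient.mk s x = Quotient.mk s y :=
        hq x y (Relation.ReflTransGen.single (Or.inr hyx))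
      have h2 : Quotient.mk s (bar x) = Quotient.mk s (bar y) :=
        hq _ _ (hbarR x y (Relation.ReflTransGen.single (Or.inr hyx)))
      simpa [Set.mem_setOf_eq, ← h1, ← h2] using hx
    · intro a
      have hne' : e (Quotient.mk s a) ≠ e (Quotient.mk s (bar a)) := by
        intro h
        exact hsep a (Quotient.exact (e.injective h))
      simp only [Set.mem_setOf_eq, hinv]
      constructor
      · exact fun h h' => absurd h (not_lt_of_gt h')
      · intro h
        exact lt_of_le_of_ne (le_of_not_gt h) hne'
    · intro x hx y hy hcov
      have hR : Relation.ReflTransGen r x y :=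
        Relation.ReflTransGen.single (Or.inl hcov.le)
      have h1 : Quotient.mk s x = Quotient.mk s y := hq x y hR
      have h2 : Quotient.mk s (bar x) = Quotient.mk s (bar y) := hq _ _ (hbarR x y hR)
      exact hy (by simpa [Set.mem_setOf_eq, ← h1, ← h2] using hx)
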